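/- Let θ, θ^W > 0 and define J_s(x) = (1/s!) θ^{(s+1)/2} ∫_{−∞}^{+∞} (2π θ^W)^{−1/2} exp(−|√θ y − x|²/(2θ^W)) He_s(y) dy for s ≥ 0, with the convention J_{−1} ≡ 0. Then J_0(x) = 1 for all x ∈ ℝ, and for every integer s ≥ 1 and all x ∈ ℝ, J_s(x) = (1/s)[(θ^W − θ) J_{s−2}(x) + x J_{s−1}(x)]. -/

import Mathlib

open MeasureTheory Real

/-- Probabilists' Hermite polynomial `He n x`, with the convention `He n ≡ 0` for `n < 0`. -/
noncomputable def He (n : ℤ) (x : ℝ) : ℝ :=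
  if n < 0 then 0 else Polynomial.aeval x (Polynomial.hermite n.toNat)

/-- `J_s(x) = (1/s!) θ^{(s+1)/2} ∫_ℝ (2πθ^W)^{−1/2} exp(−|√θ y − x|²/(2θ^W)) He_s(y) dy`
for `s ≥ 0`, with the convention `J_s ≡ 0` for `s < 0`. -/
noncomputable def J (θ θW : ℝ) (s : ℤ) (x : ℝ) : ℝ :=
  if s < 0 then 0 else
    (1 / (Nat.factorial s.toNat)) * θ ^ (((s : ℝ) + 1) / 2) *
      ∫ y : ℝ, (2 * Real.pi * θW) ^ (-(1 : ℝ) / 2) *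
        Real.exp (-(Real.sqrt θ * y - x) ^ 2 / (2 * θW)) * He s y

namespace JRec

open Polynomial Filter Topology

lemma derivative_hermite_succ (n : ℕ) :
    derivative (hermite (n + 1)) = C ((n : ℤ) + 1) * hermite n := by
  induction n with
  | zero => simp [hermite_one, hermite_zero]
  | succ n ih =>
    have h2 : hermite (n + 2) = X * hermite (n + 1) - C ((n : ℤ) + 1) * hermite n := by
      rw [hermite_succ (n + 1), ih]
    rw [h2, derivative_sub, derivative_mul, derivative_X, one_mul, derivative_mul,
      derivative_C, zero_mul, zero_add, ih]
    push_cast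
    simp only [map_add, map_one]
    linear_combination (-((C (n : ℤ) : ℤ[X]) + 1)) * hermite_succ n

lemma derivative_hermite (n : ℕ) :
    derivative (hermite n) = C (n : ℤ) * hermite (n - 1) := by
  cases n with
  | zero => simp [hermite_zero]
  | succ n => simpa using derivative_hermite_succ n

/-- The Hermite polynomial as a real polynomial. -/
noncomputable def Hr (n : ℕ) : Polynomial ℝ := (hermite n).map (Int.castRingHom ℝ)

lemma Hr_derivative (n : ℕ) : derivative (Hr n) = C (n : ℝ) * Hr (n - 1) := by
  rw [Hr, derivative_map, derivative_hermite, Polynomial.map_mul, map_C]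
  simp [Hr]

lemma Hr_succ (n : ℕ) : Hr (n + 1) = X * Hr n - derivative (Hr n) := by
  rw [Hr, hermite_succ, Polynomial.map_sub, Polynomial.map_mul, map_X, ← derivative_map]
  rfl

lemma eval_Hr_derivative (n : ℕ) (y : ℝ) :
    eval y (derivative (Hr n)) = (n : ℝ) * eval y (Hr (n - 1)) := by
  rw [Hr_derivative]; simp

lemma eval_X_Hr (n : ℕ) (y : ℝ) :
    y * eval y (Hr n) = eval y (Hr (n + 1)) + (n : ℝ) * eval y (Hr (n - 1)) := by
  rw [Hr_succ, eval_sub, eval_mul, eval_X, eval_Hr_derivative]; ring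

section Gauss

variable {b : ℝ} (c : ℝ)

lemma integrable_center (hb : 0 < b) (p : ℝ[X]) :
    Integrable (fun y : ℝ => eval y p * Real.exp (-b * y ^ 2)) := by
  induction p using Polynomial.induction_on' with
  | add p q hp hq => simp only [eval_add, add_mul]; exact hp.add hq
  | monomial n a =>
    have h := (integrable_rpow_mul_exp_neg_mul_sq hb
      (s := (n : ℝ)) (lt_of_lt_of_le neg_one_lt_zero (Nat.cast_nonneg n))).const_mul a
    simp_rw [Real.rpow_natCast] at h
    simpa [eval_monomial, mul_assoc] using h

lemma integrable_poly_gauss (hb : 0 < b) (p : ℝ[X]) :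
    Integrable (fun y : ℝ => eval y p * Real.exp (-b * (y - c) ^ 2)) := by
  have h := (integrable_center hb (p.comp (X + C c))).comp_sub_right c
  simpa [eval_comp] using h

lemma tendsto_center_atTop (hb : 0 < b) (p : ℝ[X]) :
    Tendsto (fun y : ℝ => eval y p * Real.exp (-b * y ^ 2)) atTop (𝓝 0) := by
  induction p using Polynomial.induction_on' with
  | add p q hp hq =>
    simpa [add_mul] using hp.add hq
  | monomial n a =>
    have hcomp : Tendsto (fun x : ℝ => Real.exp (-(1/2) * x)) atTop (𝓝 0) := by
      have h1 : Tendsto (fun x : ℝ => (1/2 : ℝ) * x) atTop atTop :=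
        tendsto_id.const_mul_atTop one_half_pos
      have := Real.tendsto_exp_neg_atTop_nhds_zero.comp h1
      simpa [Function.comp_def, neg_mul] using this
    have h := (rpow_mul_exp_neg_mul_sq_isLittleO_exp_neg hb
      (n : ℝ)).isBigO.trans_tendsto hcomp
    simp_rw [Real.rpow_natCast] at h
    have h2 := h.const_mul (a)
    simpa [eval_monomial, mul_assoc] using h2

lemma tendsto_gauss_atTop (hb : 0 < b) (p : ℝ[X]) :
    Tendsto (fun y : ℝ => eval y p * Real.exp (-b * (y - c) ^ 2)) atTop (𝓝 0) := by
  have h := (tendsto_center_atTop hb (p.comp (X + C c))).comp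
    (tendsto_atTop_add_const_right atTop (-c) tendsto_id)
  simpa [Function.comp_def, eval_comp, sub_eq_add_neg] using h

lemma tendsto_gauss_atBot (hb : 0 < b) (p : ℝ[X]) :
    Tendsto (fun y : ℝ => eval y p * Real.exp (-b * (y - c) ^ 2)) atBot (𝓝 0) := by
  have h := (tendsto_gauss_atTop (-c) hb (p.comp (-X))).comp tendsto_neg_atBot_atTop
  rw [Function.comp_def] at h
  refine h.congr fun y => ?_
  rw [eval_comp, show (-y - -c : ℝ) ^ 2 = (y - c) ^ 2 from by ring]
  simp

lemma integral_deriv_gauss (hb : 0 < b) (p : ℝ[X]) :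
    ∫ y : ℝ, eval y (derivative p - C (2 * b) * (X - C c) * p) * Real.exp (-b * (y - c) ^ 2)
      = 0 := by
  set f : ℝ → ℝ := fun y => eval y p * Real.exp (-b * (y - c) ^ 2) with hf
  set f' : ℝ → ℝ := fun y =>
    eval y (derivative p - C (2 * b) * (X - C c) * p) * Real.exp (-b * (y - c) ^ 2) with hf'
  have hderiv : ∀ y : ℝ, HasDerivAt f (f' y) y := by
    intro y
    have h1 : HasDerivAt (fun y : ℝ => eval y p) (eval y (derivative p)) y :=
      p.hasDerivAt y
    have h2 : HasDerivAt (fun y : ℝ => -b * (y - c) ^ 2) (-b * (2 * (y - c))) y := by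
      have h0 : HasDerivAt (fun y : ℝ => (y - c)) 1 y := (hasDerivAt_id y).sub_const c
      have := (h0.pow 2).const_mul (-b)
      simpa [mul_comm, mul_assoc, mul_left_comm] using this
    have h3 := h2.exp
    have h4 : HasDerivAt (fun y : ℝ => eval y p * Real.exp (-b * (y - c) ^ 2))
        (eval y (derivative p) * Real.exp (-b * (y - c) ^ 2)
          + eval y p * (Real.exp (-b * (y - c) ^ 2) * (-b * (2 * (y - c))))) y := h1.mul h3
    convert h4 using 1
    simp only [hf', eval_sub, eval_mul, eval_C, eval_X]
    ring
  have hint : Integrable f' := integrable_poly_gauss c hb _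
  have htop : Tendsto f atTop (𝓝 0) := tendsto_gauss_atTop c hb p
  have hbot : Tendsto f atBot (𝓝 0) := tendsto_gauss_atBot c hb p
  have hIic : ∫ y in Set.Iic (0:ℝ), f' y = f 0 - 0 :=
    integral_Iic_of_hasDerivAt_of_tendsto' (fun x _ => hderiv x) hint.integrableOn hbot
  have hIoi : ∫ y in Set.Ioi (0:ℝ), f' y = 0 - f 0 :=
    integral_Ioi_of_hasDerivAt_of_tendsto' (fun x _ => hderiv x) hint.integrableOn htop
  rw [← intervalIntegral.integral_Iic_add_Ioi hint.integrableOn hint.integrableOn, hIic, hIoi]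
  ring

lemma I_rec (hb : 0 < b) (n : ℕ) :
    (2 * b) * (∫ y : ℝ, eval y (Hr (n + 1)) * Real.exp (-b * (y - c) ^ 2))
      = (n : ℝ) * (1 - 2 * b) * (∫ y : ℝ, eval y (Hr (n - 1)) * Real.exp (-b * (y - c) ^ 2))
        + (2 * b * c) * (∫ y : ℝ, eval y (Hr n) * Real.exp (-b * (y - c) ^ 2)) := by
  have h0 := integral_deriv_gauss c hb (Hr n)
  have key : ∀ y : ℝ,
      eval y (derivative (Hr n) - C (2 * b) * (X - C c) * (Hr n)) * Real.exp (-b * (y - c) ^ 2)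
        = ((n : ℝ) - 2 * b * (n : ℝ)) * (eval y (Hr (n - 1)) * Real.exp (-b * (y - c) ^ 2))
          - (2 * b) * (eval y (Hr (n + 1)) * Real.exp (-b * (y - c) ^ 2))
          + (2 * b * c) * (eval y (Hr n) * Real.exp (-b * (y - c) ^ 2)) := by
    intro y
    have e2 := eval_X_Hr n y
    simp only [eval_sub, eval_mul, eval_C, eval_X, eval_Hr_derivative]
    linear_combination (-2 * b * Real.exp (-b * (y - c) ^ 2)) * e2
  have i1 := integrable_poly_gauss c hb (Hr (n - 1))
  have i2 := integrable_poly_gauss c hb (Hr (n + 1))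
  have i3 := integrable_poly_gauss c hb (Hr n)
  have h1 : (∫ y : ℝ, (((n : ℝ) - 2 * b * (n : ℝ)) *
        (eval y (Hr (n - 1)) * Real.exp (-b * (y - c) ^ 2))
      - (2 * b) * (eval y (Hr (n + 1)) * Real.exp (-b * (y - c) ^ 2))
      + (2 * b * c) * (eval y (Hr n) * Real.exp (-b * (y - c) ^ 2)))) = 0 := by
    rw [← h0]
    exact integral_congr_ae (Filter.Eventually.of_forall fun y => (key y).symm)
  have iA : Integrable (fun y : ℝ =>
      ((n : ℝ) - 2 * b * (n : ℝ)) * (eval y (Hr (n - 1)) * Real.exp (-b * (y - c) ^ 2))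
        - (2 * b) * (eval y (Hr (n + 1)) * Real.exp (-b * (y - c) ^ 2))) :=
    (i1.const_mul _).sub (i2.const_mul _)
  have iC : Integrable (fun y : ℝ =>
      (2 * b * c) * (eval y (Hr n) * Real.exp (-b * (y - c) ^ 2))) := i3.const_mul _
  have iA1 : Integrable (fun y : ℝ =>
      ((n : ℝ) - 2 * b * (n : ℝ)) * (eval y (Hr (n - 1)) * Real.exp (-b * (y - c) ^ 2))) :=
    i1.const_mul _
  have iA2 : Integrable (fun y : ℝ =>
      (2 * b) * (eval y (Hr (n + 1)) * Real.exp (-b * (y - c) ^ 2))) := i2.const_mul _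
  rw [integral_add iA iC, integral_sub iA1 iA2,
    integral_const_mul, integral_const_mul, integral_const_mul] at h1
  linear_combination (-(1 : ℝ)) * h1

end Gauss

lemma gauss_shift {b : ℝ} (hb : 0 < b) (c : ℝ) :
    ∫ y : ℝ, Real.exp (-b * (y - c) ^ 2) = Real.sqrt (π / b) := by
  rw [show (fun y : ℝ => Real.exp (-b * (y - c) ^ 2))
      = fun y : ℝ => (fun u : ℝ => Real.exp (-b * u ^ 2)) (y - c) from rfl]
  rw [integral_sub_right_eq_self (fun u : ℝ => Real.exp (-b * u ^ 2)) c]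
  exact integral_gaussian b

lemma J_eq (θ θW : ℝ) (hθ : 0 < θ) (hθW : 0 < θW) (n : ℕ) (x : ℝ) :
    J θ θW (n : ℤ) x = (1 / (Nat.factorial n : ℝ)) * θ ^ (((n : ℝ) + 1) / 2) *
      ((2 * π * θW) ^ (-(1 : ℝ) / 2)) *
      ∫ y : ℝ, eval y (Hr n) * Real.exp (-(θ / (2 * θW)) * (y - x / Real.sqrt θ) ^ 2) := by
  have hsθ : Real.sqrt θ ≠ 0 := by positivity
  rw [J, if_neg (by omega)]
  have hHe : ∀ y : ℝ, He (n : ℤ) y = eval y (Hr n) := by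
    intro y
    rw [He, if_neg (by omega)]
    simp [Hr, aeval_def, eval_map, algebraMap_int_eq]
  have hexp : ∀ y : ℝ, -(Real.sqrt θ * y - x) ^ 2 / (2 * θW)
      = -(θ / (2 * θW)) * (y - x / Real.sqrt θ) ^ 2 := by
    intro y
    have h1 : Real.sqrt θ * y - x = Real.sqrt θ * (y - x / Real.sqrt θ) := by
      field_simp
    rw [h1, mul_pow, Real.sq_sqrt hθ.le]
    ring
  have hre : (fun y : ℝ => (2 * π * θW) ^ (-(1 : ℝ) / 2) *
        Real.exp (-(Real.sqrt θ * y - x) ^ 2 / (2 * θW)) * He (n : ℤ) y)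
      = fun y : ℝ => (2 * π * θW) ^ (-(1 : ℝ) / 2) *
        (eval y (Hr n) * Real.exp (-(θ / (2 * θW)) * (y - x / Real.sqrt θ) ^ 2)) := by
    funext y
    rw [hHe y, hexp y]
    ring
  rw [hre, integral_const_mul]
  simp only [Int.toNat_natCast, Int.cast_natCast]
  ring

end JRec

open JRec Polynomial

/-- `J_0(x) = 1`, and for `s ≥ 1`,
`J_s(x) = (1/s)[(θ^W − θ) J_{s−2}(x) + x J_{s−1}(x)]`. -/
theorem J_recursion (θ θW : ℝ) (hθ : 0 < θ) (hθW : 0 < θW) :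
    (∀ x : ℝ, J θ θW 0 x = 1) ∧
    (∀ s : ℤ, 1 ≤ s → ∀ x : ℝ,
      J θ θW s x = (1 / (s : ℝ)) *
        ((θW - θ) * J θ θW (s - 2) x + x * J θ θW (s - 1) x)) := by
  have hsθ : Real.sqrt θ ≠ 0 := by positivity
  have hb : 0 < θ / (2 * θW) := by positivity
  have hss : Real.sqrt θ * Real.sqrt θ = θ := Real.mul_self_sqrt hθ.le
  constructor
  · intro x
    have h0 := J_eq θ θW hθ hθW 0 x
    rw [show ((0 : ℕ) : ℤ) = (0 : ℤ) by simp] at h0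
    rw [h0]
    have hHr0 : Hr 0 = 1 := by
      simp [Hr, hermite_zero]
    have hint : (∫ y : ℝ, eval y (Hr 0) *
        Real.exp (-(θ / (2 * θW)) * (y - x / Real.sqrt θ) ^ 2))
        = Real.sqrt (π / (θ / (2 * θW))) := by
      simp only [hHr0, eval_one, one_mul]
      exact gauss_shift hb _
    rw [hint]
    have hπ : π / (θ / (2 * θW)) = (2 * π * θW) / θ := by
      field_simp
    rw [hπ, Real.sqrt_div (by positivity) θ]
    rw [show (((0 : ℕ) : ℝ) + 1) / 2 = (1 / 2 : ℝ) by norm_num, ← Real.sqrt_eq_rpow]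
    rw [show (-(1 : ℝ) / 2) = -(1 / 2 : ℝ) by norm_num, Real.rpow_neg (by positivity),
      ← Real.sqrt_eq_rpow]
    have h2 : Real.sqrt (2 * π * θW) ≠ 0 := by positivity
    field_simp
    simp
  · intro s hs x
    obtain ⟨n, rfl⟩ : ∃ n : ℕ, s = (n : ℤ) + 1 := ⟨(s - 1).toNat, by omega⟩
    cases n with
    | zero =>
      have i1 : ((0 : ℕ) : ℤ) + 1 = ((1 : ℕ) : ℤ) := by norm_num
      have i2 : (((0 : ℕ) : ℤ) + 1 - 2 : ℤ) = (-1 : ℤ) := by norm_num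
      have i3 : (((0 : ℕ) : ℤ) + 1 - 1 : ℤ) = ((0 : ℕ) : ℤ) := by norm_num
      rw [i2, i3, i1, J_eq θ θW hθ hθW 1 x, J_eq θ θW hθ hθW 0 x,
        show J θ θW (-1) x = 0 from by rw [J, if_pos]; norm_num]
      have hrec := I_rec (x / Real.sqrt θ) (b := θ / (2 * θW)) hb 0
      push_cast
      push_cast at hrec
      rw [show ((1:ℝ) + 1) / 2 = (1:ℝ) by norm_num, Real.rpow_one,
        show ((0:ℝ) + 1) / 2 = (1/2 : ℝ) by norm_num, ← Real.sqrt_eq_rpow]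
      simp only [Nat.factorial_one, Nat.factorial_zero, Nat.cast_one]
      set A1 : ℝ := ∫ y : ℝ, eval y (Hr 1) *
        Real.exp (-(θ / (2 * θW)) * (y - x / Real.sqrt θ) ^ 2) with hA1def
      set A0 : ℝ := ∫ y : ℝ, eval y (Hr 0) *
        Real.exp (-(θ / (2 * θW)) * (y - x / Real.sqrt θ) ^ 2) with hA0def
      field_simp at hrec
      have hA : A1 * Real.sqrt θ = x * A0 := by
        apply mul_left_cancel₀ (show (2 * θ * (2 * θW) : ℝ) ≠ 0 by positivity)
        linear_combination (4 * θW) * hrec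
      linear_combination (Real.sqrt θ * ((2 * π * θW) ^ (-(1:ℝ) / 2))) * hA
        + (-(((2 * π * θW) ^ (-(1:ℝ) / 2)) * A1)) * hss
    | succ m =>
      have i1 : ((m + 1 : ℕ) : ℤ) + 1 = ((m + 2 : ℕ) : ℤ) := by push_cast; ring
      have i2 : (((m + 1 : ℕ) : ℤ) + 1 - 2 : ℤ) = ((m : ℕ) : ℤ) := by push_cast; ring
      have i3 : (((m + 1 : ℕ) : ℤ) + 1 - 1 : ℤ) = ((m + 1 : ℕ) : ℤ) := by push_cast; ring
      rw [i2, i3, i1, J_eq θ θW hθ hθW (m + 2) x, J_eq θ θW hθ hθW m x,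
        J_eq θ θW hθ hθW (m + 1) x]
      have hrec := I_rec (x / Real.sqrt θ) (b := θ / (2 * θW)) hb (m + 1)
      push_cast
      push_cast at hrec
      rw [show ((m:ℝ) + 2 + 1) / 2 = ((m:ℝ) + 1) / 2 + 1 by ring, Real.rpow_add hθ, Real.rpow_one,
        show ((m:ℝ) + 1 + 1) / 2 = ((m:ℝ) + 1) / 2 + 1/2 by ring, Real.rpow_add hθ,
        ← Real.sqrt_eq_rpow]
      have hf2 : ((m + 2).factorial : ℝ) = ((m:ℝ) + 2) * ((m:ℝ) + 1) * (m.factorial : ℝ) := by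
        rw [Nat.factorial_succ, Nat.factorial_succ]
        push_cast
        ring
      have hf1 : ((m + 1).factorial : ℝ) = ((m:ℝ) + 1) * (m.factorial : ℝ) := by
        rw [Nat.factorial_succ]
        push_cast
        ring
      rw [hf2, hf1]
      have e : m + 1 + 1 = m + 2 := rfl
      rw [e] at hrec
      set AP : ℝ := ∫ y : ℝ, eval y (Hr (m + 2)) *
        Real.exp (-(θ / (2 * θW)) * (y - x / Real.sqrt θ) ^ 2) with hAPdef
      set AM : ℝ := ∫ y : ℝ, eval y (Hr (m + 1)) *
        Real.exp (-(θ / (2 * θW)) * (y - x / Real.sqrt θ) ^ 2) with hAMdef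
      set Am : ℝ := ∫ y : ℝ, eval y (Hr m) *
        Real.exp (-(θ / (2 * θW)) * (y - x / Real.sqrt θ) ^ 2) with hAmdef
      field_simp at hrec
      have hA : θ * Real.sqrt θ * AP
          = ((m : ℝ) + 1) * (θW - θ) * Real.sqrt θ * Am + θ * x * AM := by
        apply mul_left_cancel₀ (show (4 * θW ^ 2 : ℝ) ≠ 0 by positivity)
        linear_combination (4 * θW ^ 2) * hrec
      have hA2 : θ * AP = ((m : ℝ) + 1) * (θW - θ) * Am + x * Real.sqrt θ * AM := by
        apply mul_left_cancel₀ hsθ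
        linear_combination hA - (x * AM) * hss
      field_simp
      linear_combination hA2
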